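/- Let $\bar{M} \in \mathbb{R}^{n \times m}$ have rank exactly $r$ (so $\sigma_r(\bar{M}) > 0$ and $\sigma_{r+1}(\bar{M}) = 0$), let $E \in \mathbb{R}^{n \times m}$ be arbitrary, and let $M = \bar{M} + E$. Let $\bar{M} = \bar{U}\bar{S}\bar{V}^\top$ be a compact SVD of $\bar{M}$ and let $USV^\top$ be a rank-$r$ truncated SVD of $M$. Then there exists an orthogonal matrix $H \in \mathbb{R}^{r \times r}$ such that $\|\bar{V}\bar{S}H - VS\| \leq 4\|E\|$, where $\|\cdot\|$ denotes the spectral (operator) norm. -/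

import Mathlib

open scoped Matrix.Norms.L2Operator


open Matrix

/-- Spectral (operator) norm of a real matrix, viewed as the operator norm of the
induced linear map between Euclidean spaces. -/
noncomputable def opNorm {n m : ℕ} (A : Matrix (Fin n) (Fin m) ℝ) : ℝ :=
  ‖LinearMap.toContinuousLinearMap (Matrix.toEuclideanLin A)‖

/-- Euclidean norm of a vector. -/
noncomputable def vecNorm {d : ℕ} (a : Fin d → ℝ) : ℝ := Real.sqrt (a ⬝ᵥ a)

/-- Weighted norm `‖a‖_Ω = sqrt (aᵀ Ω a)`. -/
noncomputable def wnorm {r : ℕ} (Ω : Matrix (Fin r) (Fin r) ℝ) (a : Fin r → ℝ) : ℝ :=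
  Real.sqrt (a ⬝ᵥ (Ω *ᵥ a))

/-- `k`-th largest singular value of a matrix, characterized as the distance (in the
spectral norm) to the set of matrices of rank `< k` (approximation numbers). -/
noncomputable def singVal {n m : ℕ} (k : ℕ) (A : Matrix (Fin n) (Fin m) ℝ) : ℝ :=
  sInf {c | ∃ B : Matrix (Fin n) (Fin m) ℝ, B.rank < k ∧ c = opNorm (A - B)}

namespace Stmt0Aux

variable {a b c : ℕ}


variable {a b c : ℕ}

lemma conjT (A : Matrix (Fin a) (Fin b) ℝ) : Aᴴ = Aᵀ := by
  ext i j; simp [conjTranspose_apply]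

lemma norm_transpose (A : Matrix (Fin a) (Fin b) ℝ) : ‖Aᵀ‖ = ‖A‖ := by
  rw [← conjT]; exact Matrix.l2_opNorm_conjTranspose A

lemma norm_mul_le (A : Matrix (Fin a) (Fin b) ℝ) (B : Matrix (Fin b) (Fin c) ℝ) :
    ‖A * B‖ ≤ ‖A‖ * ‖B‖ := Matrix.l2_opNorm_mul A B

lemma norm_tmul_self (A : Matrix (Fin a) (Fin b) ℝ) : ‖Aᵀ * A‖ = ‖A‖ * ‖A‖ := by
  rw [← conjT]; exact Matrix.l2_opNorm_conjTranspose_mul_self A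

lemma euclid_norm_sq (x : Fin b → ℝ) :
    ‖(WithLp.equiv 2 (Fin b → ℝ)).symm x‖ ^ 2 = x ⬝ᵥ x := by
  rw [EuclideanSpace.norm_eq, Real.sq_sqrt (by positivity)]
  simp [dotProduct, sq]

lemma norm_le_iff (A : Matrix (Fin a) (Fin b) ℝ) {c : ℝ} (hc : 0 ≤ c) :
    ‖A‖ ≤ c ↔ ∀ x : Fin b → ℝ, (A *ᵥ x) ⬝ᵥ (A *ᵥ x) ≤ c ^ 2 * (x ⬝ᵥ x) := by
  rw [Matrix.l2_opNorm_def, ContinuousLinearMap.opNorm_le_iff hc]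
  constructor
  · intro h x
    have := h ((WithLp.equiv 2 (Fin b → ℝ)).symm x)
    have h2 : (0:ℝ) ≤ ‖(LinearMap.toContinuousLinearMap (Matrix.toEuclideanLin A))
        ((WithLp.equiv 2 (Fin b → ℝ)).symm x)‖ := norm_nonneg _
    have h3 := mul_self_le_mul_self h2 this
    calc (A *ᵥ x) ⬝ᵥ (A *ᵥ x)
        = ‖(WithLp.equiv 2 (Fin a → ℝ)).symm (A *ᵥ x)‖ ^ 2 := (euclid_norm_sq _).symm
      _ = ‖(LinearMap.toContinuousLinearMap (Matrix.toEuclideanLin A))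
            ((WithLp.equiv 2 (Fin b → ℝ)).symm x)‖ ^ 2 := by
            congr 1
      _ ≤ (c * ‖(WithLp.equiv 2 (Fin b → ℝ)).symm x‖) ^ 2 := by
            rw [sq, sq]; exact h3
      _ = c ^ 2 * (x ⬝ᵥ x) := by rw [mul_pow, euclid_norm_sq]
  · intro h x
    have h1 := h (WithLp.equiv 2 (Fin b → ℝ) x)
    have e1 : (LinearMap.toContinuousLinearMap (Matrix.toEuclideanLin A)) x
        = (WithLp.equiv 2 (Fin a → ℝ)).symm (A *ᵥ (WithLp.equiv 2 (Fin b → ℝ) x)) := by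
      simp [LinearMap.coe_toContinuousLinearMap', Matrix.toEuclideanLin_apply]
    rw [LinearEquiv.trans_apply, e1]
    have : ‖(WithLp.equiv 2 (Fin a → ℝ)).symm (A *ᵥ (WithLp.equiv 2 (Fin b → ℝ) x))‖ ^ 2
        ≤ (c * ‖x‖) ^ 2 := by
      rw [euclid_norm_sq, mul_pow]
      calc (A *ᵥ _) ⬝ᵥ (A *ᵥ _) ≤ c ^ 2 * (_ ⬝ᵥ _) := h1
        _ = c ^ 2 * ‖x‖ ^ 2 := by rw [← euclid_norm_sq]; rfl
    have hx : (0:ℝ) ≤ c * ‖x‖ := mul_nonneg hc (norm_nonneg _)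
    nlinarith [norm_nonneg ((WithLp.equiv 2 (Fin a → ℝ)).symm (A *ᵥ (WithLp.equiv 2 (Fin b → ℝ) x)))]

lemma mulVec_dot_le (A : Matrix (Fin a) (Fin b) ℝ) (x : Fin b → ℝ) :
    (A *ᵥ x) ⬝ᵥ (A *ᵥ x) ≤ ‖A‖ ^ 2 * (x ⬝ᵥ x) :=
  (norm_le_iff A (norm_nonneg A)).mp le_rfl x

lemma norm_one_le : ‖(1 : Matrix (Fin a) (Fin a) ℝ)‖ ≤ 1 := by
  rw [norm_le_iff _ zero_le_one]
  intro x; simp [Matrix.one_mulVec]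

lemma norm_le_one_of_orthocols {U : Matrix (Fin a) (Fin b) ℝ} (hU : Uᵀ * U = 1) : ‖U‖ ≤ 1 := by
  have h : ‖U‖ * ‖U‖ ≤ 1 := by rw [← norm_tmul_self, hU]; exact norm_one_le
  nlinarith [norm_nonneg U]

lemma dot_nonneg (x : Fin b → ℝ) : (0:ℝ) ≤ x ⬝ᵥ x := by
  simpa [dotProduct] using Finset.sum_nonneg fun i (_ : i ∈ Finset.univ) => mul_self_nonneg (x i)

lemma dot_mulVec_mulVec (B : Matrix (Fin a) (Fin b) ℝ) (C : Matrix (Fin a) (Fin c) ℝ)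
    (x : Fin b → ℝ) (y : Fin c → ℝ) :
    (B *ᵥ x) ⬝ᵥ (C *ᵥ y) = x ⬝ᵥ ((Bᵀ * C) *ᵥ y) := by
  rw [← Matrix.mulVec_mulVec,
    show x ⬝ᵥ (Bᵀ *ᵥ (C *ᵥ y)) = (x ᵥ* Bᵀ) ⬝ᵥ (C *ᵥ y) from Matrix.dotProduct_mulVec _ _ _,
    Matrix.vecMul_transpose]

lemma dot_cs (x y : Fin b → ℝ) : x ⬝ᵥ y ≤ Real.sqrt (x ⬝ᵥ x) * Real.sqrt (y ⬝ᵥ y) := by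
  have h := real_inner_le_norm ((WithLp.equiv 2 (Fin b → ℝ)).symm x)
    ((WithLp.equiv 2 (Fin b → ℝ)).symm y)
  have e1 : (inner ℝ ((WithLp.equiv 2 (Fin b → ℝ)).symm x)
      ((WithLp.equiv 2 (Fin b → ℝ)).symm y) : ℝ) = x ⬝ᵥ y := by
    simp [PiLp.inner_apply, dotProduct, RCLike.inner_apply, mul_comm]
  have e2 : ‖(WithLp.equiv 2 (Fin b → ℝ)).symm x‖ = Real.sqrt (x ⬝ᵥ x) := by
    have := euclid_norm_sq x
    rw [← this, Real.sqrt_sq (norm_nonneg _)]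
  have e3 : ‖(WithLp.equiv 2 (Fin b → ℝ)).symm y‖ = Real.sqrt (y ⬝ᵥ y) := by
    have := euclid_norm_sq y
    rw [← this, Real.sqrt_sq (norm_nonneg _)]
  rw [e1, e2, e3] at h; exact h

lemma dot_quad_le (B : Matrix (Fin b) (Fin b) ℝ) (x : Fin b → ℝ) :
    x ⬝ᵥ (B *ᵥ x) ≤ ‖B‖ * (x ⬝ᵥ x) := by
  have h1 := dot_cs x (B *ᵥ x)
  have h2 : Real.sqrt ((B *ᵥ x) ⬝ᵥ (B *ᵥ x)) ≤ ‖B‖ * Real.sqrt (x ⬝ᵥ x) := by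
    have h3 : (B *ᵥ x) ⬝ᵥ (B *ᵥ x) ≤ (‖B‖ * Real.sqrt (x ⬝ᵥ x)) ^ 2 := by
      rw [mul_pow, Real.sq_sqrt (dot_nonneg x)]; exact mulVec_dot_le B x
    calc Real.sqrt ((B *ᵥ x) ⬝ᵥ (B *ᵥ x)) ≤ Real.sqrt ((‖B‖ * Real.sqrt (x ⬝ᵥ x)) ^ 2) :=
          Real.sqrt_le_sqrt h3
      _ = ‖B‖ * Real.sqrt (x ⬝ᵥ x) := Real.sqrt_sq (by positivity)
  calc x ⬝ᵥ (B *ᵥ x) ≤ Real.sqrt (x ⬝ᵥ x) * Real.sqrt ((B *ᵥ x) ⬝ᵥ (B *ᵥ x)) := h1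
    _ ≤ Real.sqrt (x ⬝ᵥ x) * (‖B‖ * Real.sqrt (x ⬝ᵥ x)) := by
        apply mul_le_mul_of_nonneg_left h2 (Real.sqrt_nonneg _)
    _ = ‖B‖ * (Real.sqrt (x ⬝ᵥ x) * Real.sqrt (x ⬝ᵥ x)) := by ring
    _ = ‖B‖ * (x ⬝ᵥ x) := by rw [Real.mul_self_sqrt (dot_nonneg x)]


variable {r : ℕ}
/-- Polar decomposition of a square real matrix. -/
lemma polar_exists (W : Matrix (Fin r) (Fin r) ℝ) :
    ∃ H R T : Matrix (Fin r) (Fin r) ℝ, Hᵀ * H = 1 ∧ H * Hᵀ = 1 ∧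
      Rᵀ = R ∧ R * R = W * Wᵀ ∧ R * H = W ∧ Tᵀ = T ∧ T * T = R := by
  classical
  set G : Matrix (Fin r) (Fin r) ℝ := W * Wᵀ with hGdef
  have hG : G.PosSemidef := by
    have := Matrix.posSemidef_self_mul_conjTranspose W
    simpa [conjT] using this
  have hHerm : G.IsHermitian := hG.1
  set μ : Fin r → ℝ := hHerm.eigenvalues with hμdef
  have hμ0 : ∀ i, 0 ≤ μ i := fun i => hG.eigenvalues_nonneg i
  set Q : Matrix (Fin r) (Fin r) ℝ := (hHerm.eigenvectorUnitary : Matrix (Fin r) (Fin r) ℝ)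
    with hQdef
  have hQt : star Q = Qᵀ := rfl
  have hQ1 : Qᵀ * Q = 1 := by
    rw [← hQt]; exact Unitary.coe_star_mul_self hHerm.eigenvectorUnitary
  have hQ2 : Q * Qᵀ = 1 := by
    rw [← hQt]; exact Unitary.coe_mul_star_self hHerm.eigenvectorUnitary
  have hspec : G = Q * Matrix.diagonal μ * Qᵀ := by
    have := hHerm.spectral_theorem
    rw [← hQt]
    rw [Unitary.conjStarAlgAut_apply] at this
    exact this
  -- rows of Y
  set Y : Matrix (Fin r) (Fin r) ℝ := Qᵀ * W with hYdef
  have hYY : Y * Yᵀ = Matrix.diagonal μ := by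
    have : Y * Yᵀ = Qᵀ * G * Q := by
      rw [hYdef, hGdef, Matrix.transpose_mul]
      noncomm_ring
    rw [this, hspec]
    calc Qᵀ * (Q * Matrix.diagonal μ * Qᵀ) * Q
        = (Qᵀ * Q) * Matrix.diagonal μ * (Qᵀ * Q) := by noncomm_ring
      _ = Matrix.diagonal μ := by rw [hQ1, Matrix.one_mul, Matrix.mul_one]
  have hrowdot : ∀ i j, Y i ⬝ᵥ Y j = Matrix.diagonal μ i j := by
    intro i j
    rw [← hYY]
    simp [Matrix.mul_apply, dotProduct, Matrix.transpose_apply]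
  -- orthonormal family
  set s : Set (Fin r) := {i | μ i ≠ 0} with hsdef
  set v : Fin r → EuclideanSpace ℝ (Fin r) :=
    fun i => (Real.sqrt (μ i))⁻¹ • (WithLp.equiv 2 (Fin r → ℝ)).symm (Y i) with hvdef
  have hinner : ∀ i j, (inner ℝ (v i) (v j) : ℝ)
      = (Real.sqrt (μ i))⁻¹ * (Real.sqrt (μ j))⁻¹ * (Matrix.diagonal μ i j) := by
    intro i j
    have hd : (inner ℝ ((WithLp.equiv 2 (Fin r → ℝ)).symm (Y i))
        ((WithLp.equiv 2 (Fin r → ℝ)).symm (Y j)) : ℝ) = Y i ⬝ᵥ Y j := by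
      simp [PiLp.inner_apply, dotProduct, RCLike.inner_apply, mul_comm]
    rw [hvdef]
    simp only []
    rw [real_inner_smul_left, real_inner_smul_right, hd, hrowdot i j]
    ring
  have hON : Orthonormal ℝ (s.restrict v) := by
    rw [orthonormal_iff_ite]
    intro ⟨i, hi⟩ ⟨j, hj⟩
    rw [show s.restrict v ⟨i, hi⟩ = v i from rfl, show s.restrict v ⟨j, hj⟩ = v j from rfl, hinner i j]
    by_cases hij : i = j
    · subst hij
      have hμi : μ i ≠ 0 := hi
      have hs : Real.sqrt (μ i) ≠ 0 := by
        rw [Real.sqrt_ne_zero' ]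
        exact lt_of_le_of_ne (hμ0 i) (Ne.symm hμi)
      simp only [Matrix.diagonal_apply_eq, if_pos rfl]
      field_simp
      rw [if_pos trivial, mul_one, Real.sq_sqrt (hμ0 i)]
    · simp [Matrix.diagonal_apply_ne _ hij, hij, Subtype.ext_iff]
  have hcard : Module.finrank ℝ (EuclideanSpace ℝ (Fin r)) = Fintype.card (Fin r) := by
    simp
  obtain ⟨bON, hb⟩ := hON.exists_orthonormalBasis_extension_of_card_eq hcard
  set Z : Matrix (Fin r) (Fin r) ℝ := Matrix.of (fun i => WithLp.equiv 2 (Fin r → ℝ) (bON i))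
    with hZdef
  have hZinner : ∀ i j, (inner ℝ (bON i) (bON j) : ℝ) = Z i ⬝ᵥ Z j := by
    intro i j
    simp [hZdef, PiLp.inner_apply, dotProduct, RCLike.inner_apply, mul_comm]
  have hZZt : Z * Zᵀ = 1 := by
    ext i j
    rw [Matrix.mul_apply, Matrix.one_apply]
    have h1 := orthonormal_iff_ite.mp bON.orthonormal i j
    rw [hZinner i j] at h1
    simpa [dotProduct, Matrix.transpose_apply] using h1
  have hZtZ : Zᵀ * Z = 1 := mul_eq_one_comm.mp hZZt
  set D2 : Matrix (Fin r) (Fin r) ℝ := Matrix.diagonal (fun i => Real.sqrt (μ i)) with hD2def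
  have hD2Z : D2 * Z = Y := by
    ext i j
    rw [hD2def, Matrix.diagonal_mul]
    by_cases hi : μ i = 0
    · have hY0 : Y i = 0 := by
        have := hrowdot i i
        rw [Matrix.diagonal_apply_eq] at this
        rw [hi] at this
        exact dotProduct_self_eq_zero.mp this
      rw [hi, Real.sqrt_zero, zero_mul]
      rw [show Y i j = (Y i) j from rfl, hY0]
      rfl
    · have hbi : bON i = v i := hb i hi
      have hZij : Z i j = (Real.sqrt (μ i))⁻¹ * Y i j := by
        rw [hZdef]
        show (WithLp.equiv 2 (Fin r → ℝ) (bON i)) j = _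
        rw [hbi, hvdef]
        rfl
      have hs : Real.sqrt (μ i) ≠ 0 := by
        rw [Real.sqrt_ne_zero' ]
        exact lt_of_le_of_ne (hμ0 i) (Ne.symm hi)
      rw [hZij]
      field_simp
  refine ⟨Q * Z, Q * D2 * Qᵀ, Q * Matrix.diagonal (fun i => Real.sqrt (Real.sqrt (μ i))) * Qᵀ,
    ?_, ?_, ?_, ?_, ?_, ?_, ?_⟩
  · calc (Q * Z)ᵀ * (Q * Z) = Zᵀ * (Qᵀ * Q) * Z := by rw [Matrix.transpose_mul]; noncomm_ring
      _ = 1 := by rw [hQ1, Matrix.mul_one, hZtZ]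
  · calc (Q * Z) * (Q * Z)ᵀ = Q * (Z * Zᵀ) * Qᵀ := by rw [Matrix.transpose_mul]; noncomm_ring
      _ = 1 := by rw [hZZt, Matrix.mul_one, hQ2]
  · rw [Matrix.transpose_mul, Matrix.transpose_mul, Matrix.transpose_transpose,
      Matrix.diagonal_transpose]
    noncomm_ring
  · have hD2sq : D2 * D2 = Matrix.diagonal μ := by
      rw [hD2def, Matrix.diagonal_mul_diagonal,
        show (fun i => Real.sqrt (μ i) * Real.sqrt (μ i)) = μ from
          funext fun i => Real.mul_self_sqrt (hμ0 i)]
    calc (Q * D2 * Qᵀ) * (Q * D2 * Qᵀ) = Q * (D2 * (Qᵀ * Q) * D2) * Qᵀ := by noncomm_ring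
      _ = Q * (D2 * D2) * Qᵀ := by rw [hQ1, Matrix.mul_one]
      _ = Q * Matrix.diagonal μ * Qᵀ := by rw [hD2sq]
      _ = W * Wᵀ := by rw [← hspec]
  · calc (Q * D2 * Qᵀ) * (Q * Z) = Q * (D2 * (Qᵀ * Q) * Z) := by noncomm_ring
      _ = Q * (D2 * Z) := by rw [hQ1, Matrix.mul_one]
      _ = Q * (Qᵀ * W) := by rw [hD2Z, hYdef]
      _ = (Q * Qᵀ) * W := by noncomm_ring
      _ = W := by rw [hQ2, Matrix.one_mul]
  · rw [Matrix.transpose_mul, Matrix.transpose_mul, Matrix.transpose_transpose,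
      Matrix.diagonal_transpose]
    noncomm_ring
  · calc (Q * Matrix.diagonal (fun i => Real.sqrt (Real.sqrt (μ i))) * Qᵀ)
        * (Q * Matrix.diagonal (fun i => Real.sqrt (Real.sqrt (μ i))) * Qᵀ)
        = Q * (Matrix.diagonal (fun i => Real.sqrt (Real.sqrt (μ i))) * (Qᵀ * Q)
            * Matrix.diagonal (fun i => Real.sqrt (Real.sqrt (μ i)))) * Qᵀ := by noncomm_ring
      _ = Q * D2 * Qᵀ := by
          rw [hQ1, Matrix.mul_one, Matrix.diagonal_mul_diagonal, hD2def,
            show (fun i => Real.sqrt (Real.sqrt (μ i)) * Real.sqrt (Real.sqrt (μ i)))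
              = fun i => Real.sqrt (μ i) from
              funext fun i => Real.mul_self_sqrt (Real.sqrt_nonneg (μ i))]


lemma sq_le_helper {a b d : ℝ} (ha : 0 ≤ a) (hb : 0 ≤ b) (h : a ^ 2 ≤ b * b) (hbd : b ≤ d) :
    a ≤ d := by nlinarith

lemma key_bound {r : ℕ} (A W : Matrix (Fin r) (Fin r) ℝ) (hW : ‖W‖ ≤ 1) :
    ∃ H : Matrix (Fin r) (Fin r) ℝ, Hᵀ * H = 1 ∧ H * Hᵀ = 1 ∧
      ‖A * (H - W)‖ ^ 2 ≤ ‖A * (1 - W * Wᵀ) * Aᵀ‖ := by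
  obtain ⟨H, R, T, hH1, hH2, hRt, hRR, hRH, hTt, hTT⟩ := polar_exists W
  refine ⟨H, hH1, hH2, ?_⟩
  have hHn : ‖H‖ ≤ 1 := norm_le_one_of_orthocols hH1
  have hWWt : ‖W * Wᵀ‖ = ‖W‖ * ‖W‖ := by
    rw [show W * Wᵀ = (Wᵀ)ᵀ * Wᵀ by rw [Matrix.transpose_transpose], norm_tmul_self,
      norm_transpose]
  have hRn : ‖R‖ ≤ 1 := by
    have h1 : ‖R‖ * ‖R‖ = ‖W‖ * ‖W‖ := by
      rw [← norm_tmul_self R, hRt, hRR, hWWt]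
    nlinarith [norm_nonneg R, norm_nonneg W]
  have hTn : ‖T‖ ≤ 1 := by
    have h1 : ‖T‖ * ‖T‖ = ‖R‖ := by rw [← norm_tmul_self T, hTt, hTT]
    nlinarith [norm_nonneg T]
  have e1 : A * (H - W) = (A * (1 - R)) * H := by rw [← hRH]; noncomm_ring
  have n1 : ‖A * (H - W)‖ ≤ ‖(1 - R) * Aᵀ‖ := by
    rw [e1]
    have e2 : ‖A * (1 - R)‖ = ‖(1 - R) * Aᵀ‖ := by
      rw [← norm_transpose (A * (1 - R)), Matrix.transpose_mul]
      congr 2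
      rw [Matrix.transpose_sub, Matrix.transpose_one, hRt]
    calc ‖A * (1 - R) * H‖ ≤ ‖A * (1 - R)‖ * ‖H‖ := norm_mul_le _ _
      _ ≤ ‖A * (1 - R)‖ * 1 := by
          exact mul_le_mul_of_nonneg_left hHn (norm_nonneg _)
      _ = ‖(1 - R) * Aᵀ‖ := by rw [mul_one, e2]
  set cc : ℝ := Real.sqrt ‖A * (1 - W * Wᵀ) * Aᵀ‖ with hccdef
  have hcc : 0 ≤ cc := Real.sqrt_nonneg _
  have hcc2 : cc ^ 2 = ‖A * (1 - W * Wᵀ) * Aᵀ‖ := Real.sq_sqrt (norm_nonneg _)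
  have n3 : ‖(1 - R) * Aᵀ‖ ≤ cc := by
    rw [norm_le_iff _ hcc]
    intro x
    set z : Fin r → ℝ := Aᵀ *ᵥ x with hzdef
    have hmv : ((1 - R) * Aᵀ) *ᵥ x = z - R *ᵥ z := by
      rw [← Matrix.mulVec_mulVec, Matrix.sub_mulVec, Matrix.one_mulVec]
    have hzRz : z ⬝ᵥ (R *ᵥ z) = (T *ᵥ z) ⬝ᵥ (T *ᵥ z) := by
      rw [dot_mulVec_mulVec T T z z, hTt, hTT]
    have hR2 : (R *ᵥ z) ⬝ᵥ (R *ᵥ z) ≤ (T *ᵥ z) ⬝ᵥ (T *ᵥ z) := by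
      have e3 : R *ᵥ z = T *ᵥ (T *ᵥ z) := by rw [Matrix.mulVec_mulVec z T T, hTT]
      rw [e3]
      calc (T *ᵥ (T *ᵥ z)) ⬝ᵥ (T *ᵥ (T *ᵥ z)) ≤ ‖T‖ ^ 2 * ((T *ᵥ z) ⬝ᵥ (T *ᵥ z)) :=
            mulVec_dot_le T _
        _ ≤ 1 * ((T *ᵥ z) ⬝ᵥ (T *ᵥ z)) := by
            have hsq : ‖T‖ ^ 2 ≤ 1 := by nlinarith [norm_nonneg T]
            exact mul_le_mul_of_nonneg_right hsq (dot_nonneg _)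
        _ = (T *ᵥ z) ⬝ᵥ (T *ᵥ z) := one_mul _
    have hWz : z ⬝ᵥ ((W * Wᵀ) *ᵥ z) = (R *ᵥ z) ⬝ᵥ (R *ᵥ z) := by
      rw [dot_mulVec_mulVec R R z z, hRt, hRR]
    have expand : (z - R *ᵥ z) ⬝ᵥ (z - R *ᵥ z)
        = z ⬝ᵥ z - 2 * (z ⬝ᵥ (R *ᵥ z)) + (R *ᵥ z) ⬝ᵥ (R *ᵥ z) := by
      rw [sub_dotProduct, dotProduct_sub, dotProduct_sub,
        dotProduct_comm (R *ᵥ z) z]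
      ring
    have final : z ⬝ᵥ ((1 - W * Wᵀ) *ᵥ z) ≤ cc ^ 2 * (x ⬝ᵥ x) := by
      have e4 : z ⬝ᵥ ((1 - W * Wᵀ) *ᵥ z) = x ⬝ᵥ ((A * (1 - W * Wᵀ) * Aᵀ) *ᵥ x) := by
        have h5 := dot_mulVec_mulVec Aᵀ ((1 - W * Wᵀ) * Aᵀ) x x
        rw [Matrix.transpose_transpose, ← Matrix.mul_assoc] at h5
        rw [← h5, hzdef, Matrix.mulVec_mulVec x (1 - W * Wᵀ) Aᵀ]
      rw [e4, hcc2]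
      exact dot_quad_le _ x
    have esub : z ⬝ᵥ ((1 - W * Wᵀ) *ᵥ z) = z ⬝ᵥ z - z ⬝ᵥ ((W * Wᵀ) *ᵥ z) := by
      rw [Matrix.sub_mulVec, Matrix.one_mulVec, dotProduct_sub]
    rw [hmv, expand]
    rw [esub, hWz] at final
    linarith [hzRz ▸ hR2]
  calc ‖A * (H - W)‖ ^ 2 ≤ ‖(1 - R) * Aᵀ‖ ^ 2 := by
        have h0 : 0 ≤ ‖A * (H - W)‖ := norm_nonneg _
        nlinarith
    _ ≤ cc ^ 2 := by nlinarith [norm_nonneg ((1 - R) * Aᵀ)]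
    _ = ‖A * (1 - W * Wᵀ) * Aᵀ‖ := hcc2


end Stmt0Aux

open Stmt0Aux in
/-- existence of a rotation aligning the compact SVD of a rank-`r`
matrix with the rank-`r` truncated SVD of its perturbation. -/
theorem stmt_0 {n m r : ℕ}
    (Mbar E M : Matrix (Fin n) (Fin m) ℝ)
    (Ubar : Matrix (Fin n) (Fin r) ℝ) (Sbar : Matrix (Fin r) (Fin r) ℝ)
    (Vbar : Matrix (Fin m) (Fin r) ℝ)
    (U : Matrix (Fin n) (Fin r) ℝ) (S : Matrix (Fin r) (Fin r) ℝ)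
    (V : Matrix (Fin m) (Fin r) ℝ)
    (hrank : Mbar.rank = r)
    (hM : M = Mbar + E)
    (hUbar : Ubarᵀ * Ubar = 1) (hVbar : Vbarᵀ * Vbar = 1)
    (hSbarDiag : Sbar.IsDiag) (hSbarPos : ∀ i, 0 < Sbar i i)
    (hMbar : Mbar = Ubar * Sbar * Vbarᵀ)
    (hU : Uᵀ * U = 1) (hV : Vᵀ * V = 1)
    (hS : S = Matrix.diagonal (fun i : Fin r => singVal (i.val + 1) M))
    (hres : opNorm (M - U * S * Vᵀ) = singVal (r + 1) M) :
    ∃ H : Matrix (Fin r) (Fin r) ℝ, Hᵀ * H = 1 ∧ H * Hᵀ = 1 ∧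
      opNorm (Vbar * Sbar * H - V * S) ≤ 4 * opNorm E := by
  classical
  have hopn : ∀ {p q : ℕ} (X : Matrix (Fin p) (Fin q) ℝ), opNorm X = ‖X‖ := fun X => rfl
  set Mhat : Matrix (Fin n) (Fin m) ℝ := U * S * Vᵀ with hMhatdef
  have hSbarT : Sbarᵀ = Sbar := by
    ext i j
    rw [Matrix.transpose_apply]
    by_cases h : i = j
    · rw [h]
    · rw [hSbarDiag (fun hh => h hh.symm), hSbarDiag h]
  have hST : Sᵀ = S := by rw [hS, Matrix.diagonal_transpose]
  -- singular value bound
  have hsing : singVal (r + 1) M ≤ ‖E‖ := by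
    have hmem : ‖E‖ ∈ {c | ∃ B : Matrix (Fin n) (Fin m) ℝ, B.rank < r + 1 ∧ c = opNorm (M - B)} := by
      refine ⟨Mbar, by rw [hrank]; exact Nat.lt_succ_self r, ?_⟩
      rw [hM, hopn]
      congr 1
      abel
    refine csInf_le ⟨0, ?_⟩ hmem
    rintro cc ⟨B, -, rfl⟩
    rw [hopn]
    exact norm_nonneg _
  have hdelta : ‖Mbar - Mhat‖ ≤ 2 * ‖E‖ := by
    have hres' : ‖M - Mhat‖ = singVal (r + 1) M := by rw [← hopn]; exact hres
    calc ‖Mbar - Mhat‖ = ‖(Mbar - M) + (M - Mhat)‖ := by congr 1; abel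
      _ ≤ ‖Mbar - M‖ + ‖M - Mhat‖ := norm_add_le _ _
      _ ≤ ‖E‖ + ‖E‖ := by
          have h1 : Mbar - M = -E := by rw [hM]; abel
          rw [h1, norm_neg, hres']
          exact add_le_add le_rfl hsing
      _ = 2 * ‖E‖ := by ring
  -- W and H
  set W : Matrix (Fin r) (Fin r) ℝ := Ubarᵀ * U with hWdef
  have hWn : ‖W‖ ≤ 1 := by
    calc ‖W‖ ≤ ‖Ubarᵀ‖ * ‖U‖ := norm_mul_le _ _
      _ ≤ 1 * 1 := by
          refine mul_le_mul ?_ (norm_le_one_of_orthocols hU) (norm_nonneg _) zero_le_one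
          rw [Stmt0Aux.norm_transpose]
          exact norm_le_one_of_orthocols hUbar
      _ = 1 := one_mul 1
  obtain ⟨H, hH1, hH2, hkey⟩ := key_bound Sbar W hWn
  refine ⟨H, hH1, hH2, ?_⟩
  rw [hopn, hopn]
  -- algebraic identity
  have hMbarT : Mbarᵀ = Vbar * Sbar * Ubarᵀ := by
    rw [hMbar, Matrix.transpose_mul, Matrix.transpose_mul, Matrix.transpose_transpose, hSbarT,
      Matrix.mul_assoc]
  have h1 : Vbar * (Sbar * W) = Mbarᵀ * U := by
    rw [hWdef, hMbarT]
    simp [Matrix.mul_assoc]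
  have h2 : Mhatᵀ * U = V * S := by
    rw [hMhatdef, Matrix.transpose_mul, Matrix.transpose_mul, Matrix.transpose_transpose, hST,
      Matrix.mul_assoc, Matrix.mul_assoc, hU, Matrix.mul_one]
  have hiden : Vbar * Sbar * H - V * S = Vbar * (Sbar * (H - W)) + (Mbar - Mhat)ᵀ * U := by
    rw [Matrix.mul_sub, Matrix.transpose_sub, Matrix.sub_mul, Matrix.mul_sub, h1, h2,
      ← Matrix.mul_assoc]
    abel
  rw [hiden]
  -- bound on X
  set P : Matrix (Fin n) (Fin n) ℝ := 1 - U * Uᵀ with hPdef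
  have hPt : Pᵀ = P := by
    rw [hPdef, Matrix.transpose_sub, Matrix.transpose_one, Matrix.transpose_mul,
      Matrix.transpose_transpose]
  have hPP : P * P = P := by
    have h3 : U * Uᵀ * (U * Uᵀ) = U * Uᵀ := by
      calc U * Uᵀ * (U * Uᵀ) = U * (Uᵀ * U) * Uᵀ := by simp [Matrix.mul_assoc]
        _ = U * Uᵀ := by rw [hU, Matrix.mul_one]
    rw [hPdef, Matrix.sub_mul, Matrix.mul_sub, Matrix.mul_sub]
    simp only [Matrix.one_mul, Matrix.mul_one, h3]
    abel
  have hPMhat : P * Mhat = 0 := by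
    rw [hPdef, Matrix.sub_mul, Matrix.one_mul]
    have h3 : U * Uᵀ * Mhat = Mhat := by
      calc U * Uᵀ * Mhat = U * (Uᵀ * U) * (S * Vᵀ) := by rw [hMhatdef]; simp [Matrix.mul_assoc]
        _ = Mhat := by rw [hU, Matrix.mul_one, hMhatdef, Matrix.mul_assoc]
    rw [h3, sub_self]
  set X : Matrix (Fin n) (Fin r) ℝ := P * (Mbar - Mhat) * Vbar with hXdef
  have hXeq : X = P * (Ubar * Sbar) := by
    have h4 : Mbar * Vbar = Ubar * Sbar := by
      calc Mbar * Vbar = Ubar * Sbar * (Vbarᵀ * Vbar) := by rw [hMbar, Matrix.mul_assoc]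
        _ = Ubar * Sbar := by rw [hVbar, Matrix.mul_one]
    calc X = (P * Mbar - P * Mhat) * Vbar := by rw [hXdef, Matrix.mul_sub]
      _ = P * (Mbar * Vbar) - P * Mhat * Vbar := by rw [Matrix.sub_mul, Matrix.mul_assoc]
      _ = P * (Ubar * Sbar) := by rw [h4, hPMhat, Matrix.zero_mul, sub_zero]
  have hXtX : Xᵀ * X = Sbar * (1 - W * Wᵀ) * Sbarᵀ := by
    have hWt : Wᵀ = Uᵀ * Ubar := by rw [hWdef, Matrix.transpose_mul, Matrix.transpose_transpose]
    have hmid : Ubarᵀ * (P * P) * Ubar = 1 - W * Wᵀ := by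
      rw [hPP, hPdef, Matrix.mul_sub, Matrix.mul_one, Matrix.sub_mul, hUbar, hWdef, hWt]
      congr 1
      simp [Matrix.mul_assoc]
    have e : Xᵀ * X = Sbar * (Ubarᵀ * (P * P) * Ubar) * Sbar := by
      rw [hXeq, Matrix.transpose_mul, Matrix.transpose_mul, hPt, hSbarT]
      simp [Matrix.mul_assoc]
    rw [e, hmid, hSbarT]
  have hPn : ‖P‖ ≤ 1 := by
    have h5 : ‖P‖ * ‖P‖ = ‖P‖ := by rw [← norm_tmul_self P, hPt, hPP]
    nlinarith [norm_nonneg P]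
  have hXn : ‖X‖ ≤ ‖Mbar - Mhat‖ := by
    calc ‖X‖ ≤ ‖P * (Mbar - Mhat)‖ * ‖Vbar‖ := norm_mul_le _ _
      _ ≤ ‖P * (Mbar - Mhat)‖ * 1 := by
          exact mul_le_mul_of_nonneg_left (norm_le_one_of_orthocols hVbar) (norm_nonneg _)
      _ = ‖P * (Mbar - Mhat)‖ := mul_one _
      _ ≤ ‖P‖ * ‖Mbar - Mhat‖ := norm_mul_le _ _
      _ ≤ 1 * ‖Mbar - Mhat‖ := by
          exact mul_le_mul_of_nonneg_right hPn (norm_nonneg _)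
      _ = ‖Mbar - Mhat‖ := one_mul _
  have hSbarHW : ‖Sbar * (H - W)‖ ≤ ‖Mbar - Mhat‖ := by
    have h6 : ‖Sbar * (1 - W * Wᵀ) * Sbarᵀ‖ = ‖X‖ * ‖X‖ := by rw [← hXtX, norm_tmul_self]
    have h7 : ‖Sbar * (H - W)‖ ^ 2 ≤ ‖X‖ * ‖X‖ := by rw [← h6]; exact hkey
    exact sq_le_helper (norm_nonneg _) (norm_nonneg _) h7 hXn
  calc ‖Vbar * (Sbar * (H - W)) + (Mbar - Mhat)ᵀ * U‖
      ≤ ‖Vbar * (Sbar * (H - W))‖ + ‖(Mbar - Mhat)ᵀ * U‖ := norm_add_le _ _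
    _ ≤ ‖Mbar - Mhat‖ + ‖Mbar - Mhat‖ := by
        have hb1 : ‖Vbar * (Sbar * (H - W))‖ ≤ ‖Mbar - Mhat‖ := by
          calc ‖Vbar * (Sbar * (H - W))‖ ≤ ‖Vbar‖ * ‖Sbar * (H - W)‖ := norm_mul_le _ _
            _ ≤ 1 * ‖Mbar - Mhat‖ := by
                exact mul_le_mul (norm_le_one_of_orthocols hVbar) hSbarHW (norm_nonneg _)
                  zero_le_one
            _ = ‖Mbar - Mhat‖ := one_mul _
        have hb2 : ‖(Mbar - Mhat)ᵀ * U‖ ≤ ‖Mbar - Mhat‖ := by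
          calc ‖(Mbar - Mhat)ᵀ * U‖ ≤ ‖(Mbar - Mhat)ᵀ‖ * ‖U‖ := norm_mul_le _ _
            _ ≤ ‖Mbar - Mhat‖ * 1 := by
                rw [Stmt0Aux.norm_transpose]
                exact mul_le_mul_of_nonneg_left (norm_le_one_of_orthocols hU) (norm_nonneg _)
            _ = ‖Mbar - Mhat‖ := mul_one _
        exact add_le_add hb1 hb2
    _ ≤ 2 * ‖E‖ + 2 * ‖E‖ := add_le_add hdelta hdelta
    _ = 4 * ‖E‖ := by ring
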